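/- Let F_q be a finite field with q elements of characteristic greater than 2. Let P be a finite set of points in F_q² with a weight function w' : P → ℕ₊, and let L be a finite set of affine lines in F_q² with a weight function w : L → ℕ₊. Define the number of weighted incidences I = Σ_{p∈P} Σ_{l∈L, p∈l} w'(p)·w(l). Then I ≤ (Σ_{p∈P} w'(p))·(Σ_{l∈L} w(l))/q + (Σ_{p∈P} w'(p)²)^{1/2}·(Σ_{l∈L} w(l)²)^{1/2}·q^{1/2}. -/

import Mathlib

open scoped Classical

/-- `l` is an affine line in `F²`: a coset of a one-dimensional subspace. -/
def IsAffineLine {F : Type*} [Field F] (l : Set (F × F)) : Prop :=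
  ∃ d p : F × F, d ≠ 0 ∧ l = {x | ∃ t : F, x = t • d + p}

section aux
variable {F : Type} [Field F] [Fintype F]

noncomputable def lineT (l : Set (F × F)) : Finset (F × F) :=
  Finset.univ.filter (· ∈ l)

lemma card_lineT {l : Set (F × F)} (hl : IsAffineLine l) :
    (lineT l).card = Fintype.card F := by
  obtain ⟨d, p, hd, rfl⟩ := hl
  have h : lineT {x : F × F | ∃ t : F, x = t • d + p}
      = Finset.univ.image (fun t : F => t • d + p) := by
    ext x
    simp [lineT, eq_comm]
  rw [h, Finset.card_image_of_injective _ ?_, Finset.card_univ]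
  intro a b hab
  have h2 : a • d = b • d := by
    have := hab
    simpa using this
  exact smul_left_injective F hd h2

lemma line_eq_of_two_points {l : Set (F × F)} (hl : IsAffineLine l) {x y : F × F}
    (hx : x ∈ l) (hy : y ∈ l) (hxy : x ≠ y) :
    l = {z | ∃ t : F, z = t • (y - x) + x} := by
  obtain ⟨d, p, hd, rfl⟩ := hl
  obtain ⟨a, rfl⟩ := hx
  obtain ⟨b, rfl⟩ := hy
  have hba : b - a ≠ 0 := by
    intro h
    apply hxy
    have : b = a := by
      have := sub_eq_zero.mp h; exact this
    rw [this]
  have hyx : (b • d + p) - (a • d + p) = (b - a) • d := by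
    rw [sub_smul]; abel
  ext z
  simp only [Set.mem_setOf_eq]
  constructor
  · rintro ⟨c, rfl⟩
    refine ⟨(c - a) / (b - a), ?_⟩
    rw [hyx, smul_smul, div_mul_cancel₀ _ hba, sub_smul]
    abel
  · rintro ⟨t, rfl⟩
    refine ⟨t * (b - a) + a, ?_⟩
    rw [hyx, smul_smul, add_smul]
    abel

lemma card_inter_le_one {l l' : Set (F × F)} (hl : IsAffineLine l) (hl' : IsAffineLine l')
    (hne : l ≠ l') : (lineT l ∩ lineT l').card ≤ 1 := by
  rw [Finset.card_le_one]
  intro x hx y hy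
  by_contra hxy
  apply hne
  simp only [Finset.mem_inter, lineT, Finset.mem_filter, Finset.mem_univ, true_and] at hx hy
  rw [line_eq_of_two_points hl hx.1 hy.1 hxy,
    line_eq_of_two_points hl' hx.2 hy.2 hxy]

end aux

/-- A weighted Szemerédi–Trotter theorem over `F_q`: for a finite (multi)set of points
with weights `w'` and a finite (multi)set of lines with weights `w`, the number of
weighted incidences satisfies
`I ≤ (Σ w')·(Σ w)/q + (Σ w'²)^{1/2}·(Σ w²)^{1/2}·q^{1/2}`. -/
theorem weighted_szemeredi_trotter (F : Type) [Field F] [Fintype F]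
    (hchar : 2 < ringChar F)
    (P : Finset (F × F)) (L : Finset (Set (F × F)))
    (hL : ∀ l ∈ L, IsAffineLine l)
    (w' : (F × F) → ℕ) (w : Set (F × F) → ℕ)
    (hw' : ∀ p ∈ P, 0 < w' p) (hw : ∀ l ∈ L, 0 < w l) :
    (∑ p ∈ P, ∑ l ∈ L, if p ∈ l then ((w' p : ℝ) * (w l : ℝ)) else 0) ≤
      (∑ p ∈ P, (w' p : ℝ)) * (∑ l ∈ L, (w l : ℝ)) / (Fintype.card F : ℝ) +
        Real.sqrt (∑ p ∈ P, (w' p : ℝ) ^ 2) * Real.sqrt (∑ l ∈ L, (w l : ℝ) ^ 2) *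
          Real.sqrt (Fintype.card F : ℝ) := by
  classical
  set q : ℝ := (Fintype.card F : ℝ) with hqdef
  have hq0 : (0 : ℝ) < q := by
    rw [hqdef]
    exact_mod_cast Fintype.card_pos (α := F)
  set g : (F × F) → Set (F × F) → ℝ :=
    fun p l => (if p ∈ l then (1 : ℝ) else 0) - 1 / q with hg
  set S : (F × F) → ℝ := fun p => ∑ l ∈ L, (w l : ℝ) * g p l with hS
  -- counting facts
  have hTcard : ∀ l ∈ L, ((lineT l).card : ℝ) = q := by
    intro l hl
    rw [card_lineT (hL l hl)]
  have hcount : ∀ s : Set (F × F),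
      (∑ p : F × F, if p ∈ s then (1 : ℝ) else 0) = ((lineT s).card : ℝ) := by
    intro s
    rw [Finset.sum_boole]
    rfl
  -- key second-moment computation for pairs of lines
  have hgg : ∀ l ∈ L, ∀ l' ∈ L,
      (∑ p : F × F, g p l * g p l') = ((lineT l ∩ lineT l').card : ℝ) - 1 := by
    intro l hl l' hl'
    have h1 : ∀ p : F × F, g p l * g p l'
        = (if p ∈ l ∧ p ∈ l' then (1 : ℝ) else 0)
          - (if p ∈ l then (1 : ℝ) else 0) / q
          - (if p ∈ l' then (1 : ℝ) else 0) / q + 1 / q ^ 2 := by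
      intro p
      simp only [hg]
      by_cases h1 : p ∈ l <;> by_cases h2 : p ∈ l' <;> simp [h1, h2] <;> ring
    simp only [h1]
    rw [Finset.sum_add_distrib, Finset.sum_sub_distrib, Finset.sum_sub_distrib]
    have e1 : (∑ p : F × F, if p ∈ l ∧ p ∈ l' then (1 : ℝ) else 0)
        = ((lineT l ∩ lineT l').card : ℝ) := by
      rw [Finset.sum_boole]
      congr 1
      simp [lineT, Finset.filter_and]
    have e2 : (∑ p : F × F, (if p ∈ l then (1 : ℝ) else 0) / q)
        = 1 := by
      rw [← Finset.sum_div, hcount, hTcard l hl, div_self hq0.ne']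
    have e3 : (∑ p : F × F, (if p ∈ l' then (1 : ℝ) else 0) / q)
        = 1 := by
      rw [← Finset.sum_div, hcount, hTcard l' hl', div_self hq0.ne']
    have e4 : (∑ _p : F × F, 1 / q ^ 2) = 1 := by
      rw [Finset.sum_const, Finset.card_univ, Fintype.card_prod, nsmul_eq_mul]
      push_cast
      rw [← hqdef]
      field_simp
    rw [e1, e2, e3, e4]
    ring
  -- bound on the full second moment
  have hSsum : (∑ p : F × F, S p ^ 2) ≤ q * ∑ l ∈ L, (w l : ℝ) ^ 2 := by
    have expand : (∑ p : F × F, S p ^ 2)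
        = ∑ l ∈ L, ∑ l' ∈ L, (w l : ℝ) * (w l' : ℝ) * ∑ p : F × F, g p l * g p l' := by
      have h1 : ∀ p : F × F, S p ^ 2
          = ∑ l ∈ L, ∑ l' ∈ L, (w l : ℝ) * (w l' : ℝ) * (g p l * g p l') := by
        intro p
        rw [hS, sq, Finset.sum_mul_sum]
        refine Finset.sum_congr rfl fun l _ => Finset.sum_congr rfl fun l' _ => by ring
      simp only [h1]
      rw [Finset.sum_comm]
      refine Finset.sum_congr rfl fun l _ => ?_
      rw [Finset.sum_comm]
      refine Finset.sum_congr rfl fun l' _ => ?_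
      rw [← Finset.mul_sum]
    rw [expand]
    have bound : ∀ l ∈ L,
        (∑ l' ∈ L, (w l : ℝ) * (w l' : ℝ) * ∑ p : F × F, g p l * g p l')
          ≤ (w l : ℝ) ^ 2 * q := by
      intro l hl
      rw [← Finset.add_sum_erase _ _ hl]
      have hdiag : (w l : ℝ) * (w l : ℝ) * (∑ p : F × F, g p l * g p l)
          = (w l : ℝ) ^ 2 * (q - 1) := by
        rw [hgg l hl l hl, Finset.inter_self, hTcard l hl]
        ring
      have hoff : (∑ l' ∈ L.erase l,
          (w l : ℝ) * (w l' : ℝ) * ∑ p : F × F, g p l * g p l') ≤ 0 := by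
        apply Finset.sum_nonpos
        intro l' hl'
        have hl'L : l' ∈ L := Finset.mem_of_mem_erase hl'
        have hne : l ≠ l' := (Finset.ne_of_mem_erase hl').symm
        rw [hgg l hl l' hl'L]
        have hc : ((lineT l ∩ lineT l').card : ℝ) ≤ 1 := by
          exact_mod_cast card_inter_le_one (hL l hl) (hL l' hl'L) hne
        have h0 : ((lineT l ∩ lineT l').card : ℝ) - 1 ≤ 0 := by linarith
        exact mul_nonpos_of_nonneg_of_nonpos (by positivity) h0
      rw [hdiag]
      nlinarith [sq_nonneg (w l : ℝ)]
    calc (∑ l ∈ L, ∑ l' ∈ L, (w l : ℝ) * (w l' : ℝ) * ∑ p : F × F, g p l * g p l')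
        ≤ ∑ l ∈ L, (w l : ℝ) ^ 2 * q := Finset.sum_le_sum bound
      _ = q * ∑ l ∈ L, (w l : ℝ) ^ 2 := by rw [← Finset.sum_mul, mul_comm]
  -- decompose the incidence count
  have key1 : (∑ p ∈ P, ∑ l ∈ L, if p ∈ l then ((w' p : ℝ) * (w l : ℝ)) else 0)
      = (∑ p ∈ P, (w' p : ℝ)) * (∑ l ∈ L, (w l : ℝ)) / q
        + ∑ p ∈ P, (w' p : ℝ) * S p := by
    have h1 : ∀ p : F × F, (∑ l ∈ L, if p ∈ l then ((w' p : ℝ) * (w l : ℝ)) else 0)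
        = (w' p : ℝ) * (∑ l ∈ L, (w l : ℝ)) / q + (w' p : ℝ) * S p := by
      intro p
      rw [hS, Finset.mul_sum, Finset.mul_sum, Finset.sum_div, ← Finset.sum_add_distrib]
      refine Finset.sum_congr rfl fun l _ => ?_
      simp only [hg]
      by_cases h : p ∈ l <;> simp [h] <;> ring
    rw [Finset.sum_congr rfl fun p _ => h1 p, Finset.sum_add_distrib, ← Finset.sum_div,
      ← Finset.sum_mul]
  rw [key1]
  have cs := Finset.sum_mul_sq_le_sq_mul_sq P (fun p => (w' p : ℝ)) S
  have h2 : (∑ p ∈ P, (w' p : ℝ) * S p) ^ 2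
      ≤ (∑ p ∈ P, (w' p : ℝ) ^ 2) * (q * ∑ l ∈ L, (w l : ℝ) ^ 2) := by
    refine cs.trans ?_
    have hPS : (∑ p ∈ P, S p ^ 2) ≤ ∑ p : F × F, S p ^ 2 :=
      Finset.sum_le_sum_of_subset_of_nonneg (Finset.subset_univ P) fun _ _ _ => sq_nonneg _
    have hA : (0 : ℝ) ≤ ∑ p ∈ P, (w' p : ℝ) ^ 2 := by positivity
    nlinarith [hSsum]
  have h3 : (∑ p ∈ P, (w' p : ℝ) * S p)
      ≤ Real.sqrt ((∑ p ∈ P, (w' p : ℝ) ^ 2) * (q * ∑ l ∈ L, (w l : ℝ) ^ 2)) :=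
    calc (∑ p ∈ P, (w' p : ℝ) * S p) ≤ |∑ p ∈ P, (w' p : ℝ) * S p| := le_abs_self _
      _ = Real.sqrt ((∑ p ∈ P, (w' p : ℝ) * S p) ^ 2) := (Real.sqrt_sq_eq_abs _).symm
      _ ≤ _ := Real.sqrt_le_sqrt h2
  have h4 : Real.sqrt ((∑ p ∈ P, (w' p : ℝ) ^ 2) * (q * ∑ l ∈ L, (w l : ℝ) ^ 2))
      = Real.sqrt (∑ p ∈ P, (w' p : ℝ) ^ 2) * Real.sqrt (∑ l ∈ L, (w l : ℝ) ^ 2)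
        * Real.sqrt q := by
    rw [Real.sqrt_mul (by positivity), Real.sqrt_mul hq0.le]
    ring
  exact add_le_add_right (h4 ▸ h3) _
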